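/- Let X_1,…,X_n be the indicators of red draws in the Pólya urn model, let X_n' be a random variable whose conditional distribution given (X_1,…,X_n) equals the conditional distribution of X_n given (X_1,…,X_{n−1}), let W = (1/n)∑_{j=1}^n X_j and W' = W − X_n/n + X_n'/n. Then E[W' − W | W] = ((a+b)/(n(a+b+n−1)))·(a/(a+b) − W); that is, E[W' − W | W] = λ·γ_{a,b}(W) with γ_{a,b}(x) = (a+b)(a/(a+b) − x) and λ = 1/(n(a+b+n−1)). -/

import Mathlib

open MeasureTheory Set Filter Topology

noncomputable section

/-- The Pólya pmf of the vector `(X_1, …, X_n)` of indicators of red draws, evaluated at a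
pattern `x ∈ {0,1}ⁿ` (as a `Bool`-vector): with `k = ∑ x_j`,
`P(X = x) = ∏_{i<k}(r+ci) ∏_{j<n-k}(w+cj) / ∏_{l<n}(r+w+cl)`. -/
def polyaPMF (n r w c : ℕ) (x : Fin n → Bool) : ℝ :=
  ((∏ i ∈ Finset.range (Finset.univ.filter (fun j => x j = true)).card, ((r : ℝ) + c * i)) *
      ∏ j ∈ Finset.range (n - (Finset.univ.filter (fun j => x j = true)).card),
        ((w : ℝ) + c * j)) /
    ∏ l ∈ Finset.range n, ((r : ℝ) + w + c * l)

def pPk (n r w c k : ℕ) : ℝ :=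
  ((∏ i ∈ Finset.range k, ((r : ℝ) + c * i)) *
      ∏ j ∈ Finset.range (n - k), ((w : ℝ) + c * j)) /
    ∏ l ∈ Finset.range n, ((r : ℝ) + w + c * l)

def ones {n : ℕ} (x : Fin n → Bool) : ℕ := (Finset.univ.filter (fun j => x j = true)).card

lemma polyaPMF_eq (n r w c : ℕ) (x : Fin n → Bool) :
    polyaPMF n r w c x = pPk n r w c (ones x) := rfl

lemma pPk_pos (n r w c : ℕ) (hr : 0 < r) (hw : 0 < w) (k : ℕ) : 0 < pPk n r w c k := by
  have h1 : (0:ℝ) < r := by exact_mod_cast hr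
  have h2 : (0:ℝ) < w := by exact_mod_cast hw
  apply div_pos
  · exact mul_pos (Finset.prod_pos fun i _ => by positivity)
      (Finset.prod_pos fun j _ => by positivity)
  · exact Finset.prod_pos fun l _ => by positivity

lemma pPk_cross (n r w c : ℕ) (hr : 0 < r) (hw : 0 < w) {m : ℕ} (hm : m < n) :
    pPk n r w c (m + 1) * ((r : ℝ) + w + c * ((n : ℝ) - 1)) =
      (pPk n r w c m + pPk n r w c (m + 1)) * ((r : ℝ) + c * m) := by
  have h1 : (0:ℝ) < r := by exact_mod_cast hr
  have h2 : (0:ℝ) < w := by exact_mod_cast hw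
  have hden : (0:ℝ) < ∏ l ∈ Finset.range n, ((r:ℝ) + w + c * l) :=
    Finset.prod_pos fun l _ => by positivity
  unfold pPk
  have e1 : n - m = (n - (m + 1)) + 1 := by omega
  rw [e1, Finset.prod_range_succ, Finset.prod_range_succ]
  have e2 : ((n - (m + 1) : ℕ) : ℝ) = (n : ℝ) - 1 - m := by
    rw [Nat.cast_sub (by omega)]; push_cast; ring
  rw [e2]
  field_simp
  ring

lemma ones_comp {n : ℕ} (x : Fin n → Bool) (σ : Equiv.Perm (Fin n)) :
    ones (x ∘ σ) = ones x := by
  unfold ones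
  rw [Finset.card_filter, Finset.card_filter]
  exact Equiv.sum_comp σ (fun j => if x j = true then 1 else 0)

lemma count_ones (n k : ℕ) (l : Fin n) :
    n * (Finset.univ.filter (fun x : Fin n → Bool => ones x = k ∧ x l = true)).card
      = k * (Finset.univ.filter (fun x : Fin n → Bool => ones x = k)).card := by
  classical
  have hsame : ∀ j : Fin n,
      (Finset.univ.filter (fun x : Fin n → Bool => ones x = k ∧ x j = true)).card
        = (Finset.univ.filter (fun x : Fin n → Bool => ones x = k ∧ x l = true)).card := by
    intro j
    apply Finset.card_bij' (fun x _ => x ∘ (Equiv.swap j l)) (fun x _ => x ∘ (Equiv.swap j l))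
    · intro x hx
      simp only [Finset.mem_filter, Finset.mem_univ, true_and] at hx ⊢
      refine ⟨by rw [ones_comp]; exact hx.1, ?_⟩
      simpa [Equiv.swap_apply_right] using hx.2
    · intro x hx
      simp only [Finset.mem_filter, Finset.mem_univ, true_and] at hx ⊢
      refine ⟨by rw [ones_comp]; exact hx.1, ?_⟩
      simpa [Equiv.swap_apply_left] using hx.2
    · intro x _; funext i; simp
    · intro x _; funext i; simp
  have hsum : ∑ j : Fin n,
      (Finset.univ.filter (fun x : Fin n → Bool => ones x = k ∧ x j = true)).card
        = k * (Finset.univ.filter (fun x : Fin n → Bool => ones x = k)).card := by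
    have h1 : ∀ j : Fin n,
        (Finset.univ.filter (fun x : Fin n → Bool => ones x = k ∧ x j = true)).card
          = ∑ x ∈ Finset.univ.filter (fun x : Fin n → Bool => ones x = k),
              (if x j = true then 1 else 0) := by
      intro j
      rw [← Finset.filter_filter, Finset.card_filter]
    simp_rw [h1]
    rw [Finset.sum_comm]
    rw [Finset.sum_congr rfl (fun x hx => ?_)]
    · rw [Finset.sum_const, smul_eq_mul, mul_comm]
    · simp only [Finset.mem_filter, Finset.mem_univ, true_and] at hx
      rw [← Finset.card_filter]
      exact hx
  calc n * (Finset.univ.filter (fun x : Fin n → Bool => ones x = k ∧ x l = true)).card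
      = ∑ _j : Fin n,
          (Finset.univ.filter (fun x : Fin n → Bool => ones x = k ∧ x l = true)).card := by
        rw [Finset.sum_const, Finset.card_univ, Fintype.card_fin, smul_eq_mul]
    _ = ∑ j : Fin n,
          (Finset.univ.filter (fun x : Fin n → Bool => ones x = k ∧ x j = true)).card :=
        Finset.sum_congr rfl fun j _ => (hsame j).symm
    _ = _ := hsum

lemma ones_update_succ {n : ℕ} (x : Fin n → Bool) (l : Fin n) :
    ones (Function.update x l true) = ones (Function.update x l false) + 1 := by
  classical
  unfold ones
  have h1 : (Finset.univ.filter (fun j => Function.update x l true j = true))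
      = insert l (Finset.univ.filter (fun j => Function.update x l false j = true)) := by
    ext j
    by_cases hj : j = l <;> simp [hj, Function.update_apply]
  rw [h1, Finset.card_insert_of_notMem (by simp [Function.update_apply])]

lemma ones_update_lt {n : ℕ} (hn : 0 < n) (x : Fin n → Bool) (l : Fin n) :
    ones (Function.update x l false) < n := by
  classical
  unfold ones
  have hsub : (Finset.univ.filter (fun j => Function.update x l false j = true))
      ⊆ Finset.univ.erase l := by
    intro j hj
    simp only [Finset.mem_filter, Finset.mem_univ, true_and] at hj
    refine Finset.mem_erase.2 ⟨?_, Finset.mem_univ j⟩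
    rintro rfl; simp [Function.update_apply] at hj
  calc _ ≤ (Finset.univ.erase l).card := Finset.card_le_card hsub
    _ < n := by
        rw [Finset.card_erase_of_mem (Finset.mem_univ l), Finset.card_univ, Fintype.card_fin]
        omega

lemma perk_algebra (n r w c : ℕ) (hn : 0 < n) (hr : 0 < r) (hw : 0 < w) (hc : 0 < c)
    (A B : ℝ) (hA : A = (r : ℝ) / c) (hB : B = (w : ℝ) / c) (k : ℕ) (N M p : ℝ)
    (hNM : (n : ℝ) * M = k * N) :
    N * ((1 / (n : ℝ)) * (p * ((r : ℝ) + c * k) / ((r : ℝ) + w + c * ((n : ℝ) - 1))))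
      + M * ((1 / (n : ℝ)) * (-(c : ℝ) * p / ((r : ℝ) + w + c * ((n : ℝ) - 1)) - p)) =
    N * ((1 / (n * (A + B + (n : ℝ) - 1))) * ((A + B) * (A / (A + B) - (k : ℝ) / n)) * p) := by
  subst hA hB
  have hc0 : (c : ℝ) ≠ 0 := by positivity
  have hn0 : (n : ℝ) ≠ 0 := by positivity
  have hn1 : (1 : ℝ) ≤ n := by exact_mod_cast hn
  have hr0 : (0:ℝ) < r := by exact_mod_cast hr
  have hw0 : (0:ℝ) < w := by exact_mod_cast hw
  have hD : (0:ℝ) < (r : ℝ) + w + c * ((n : ℝ) - 1) := by nlinarith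
  have hAB : (0:ℝ) < (r : ℝ) / c + (w : ℝ) / c := by positivity
  have hABn : (r : ℝ) / c + (w : ℝ) / c + (n : ℝ) - 1
      = ((r : ℝ) + w + c * ((n : ℝ) - 1)) / c := by field_simp; ring
  have hM : M = k * N / n := by field_simp at hNM ⊢; linarith
  subst hM
  rw [hABn]
  field_simp
  ring

set_option maxHeartbeats 2000000 in
theorem polya_first_regression
    {Ω : Type*} [MeasurableSpace Ω] (μ : Measure Ω) [IsProbabilityMeasure μ]
    (n r w c : ℕ) (hn : 0 < n) (hr : 0 < r) (hw : 0 < w) (hc : 0 < c)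
    (X : Fin n → Ω → ℝ) (X' : Ω → ℝ)
    (hXm : ∀ j, Measurable (X j)) (hX'm : Measurable X')
    (hXval : ∀ j ω, X j ω = 0 ∨ X j ω = 1) (hX'val : ∀ ω, X' ω = 0 ∨ X' ω = 1)
    (hjoint : ∀ x : Fin n → Bool,
      μ {ω | ∀ j, X j ω = if x j then 1 else 0} = ENNReal.ofReal (polyaPMF n r w c x))
    (hcond : ∀ x : Fin n → Bool,
      μ ({ω | X' ω = 1} ∩ {ω | ∀ j, X j ω = if x j then 1 else 0}) *
          μ {ω | ∀ j : Fin n, (j : ℕ) < n - 1 → X j ω = if x j then 1 else 0} =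
        μ {ω | ∀ j, X j ω = if x j then 1 else 0} *
          μ ({ω | X ⟨n - 1, Nat.sub_lt hn Nat.one_pos⟩ ω = 1} ∩
            {ω | ∀ j : Fin n, (j : ℕ) < n - 1 → X j ω = if x j then 1 else 0}))
    (A B : ℝ) (hA : A = (r : ℝ) / c) (hB : B = (w : ℝ) / c)
    (W W' : Ω → ℝ)
    (hW : W = fun ω => (∑ j, X j ω) / n)
    (hW' : W' = fun ω => W ω - X ⟨n - 1, Nat.sub_lt hn Nat.one_pos⟩ ω / n + X' ω / n) :
    μ[(fun ω => W' ω - W ω) | MeasurableSpace.comap W inferInstance] =ᵐ[μ]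
      fun ω => (1 / (n * (A + B + n - 1))) * ((A + B) * (A / (A + B) - W ω)) := by
  classical
  set l : Fin n := ⟨n - 1, Nat.sub_lt hn Nat.one_pos⟩ with hldef
  have hr0 : (0:ℝ) < r := by exact_mod_cast hr
  have hw0 : (0:ℝ) < w := by exact_mod_cast hw
  have hn0 : (0:ℝ) < n := by exact_mod_cast hn
  have hn1 : (1:ℝ) ≤ n := by exact_mod_cast hn
  have hD : (0:ℝ) < (r:ℝ) + w + c * ((n:ℝ) - 1) := by
    have : (0:ℝ) ≤ c := by positivity
    nlinarith
  -- the events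
  set E : (Fin n → Bool) → Set Ω := fun x => {ω | ∀ j, X j ω = if x j then 1 else 0} with hE
  have hEmeas : ∀ x, MeasurableSet (E x) := by
    intro x
    have : E x = ⋂ j, (X j) ⁻¹' {if x j then (1:ℝ) else 0} := by
      ext ω; simp [hE, Set.mem_iInter]
    rw [this]
    exact MeasurableSet.iInter fun j => hXm j (measurableSet_singleton _)
  have hEμ : ∀ x, μ (E x) = ENNReal.ofReal (pPk n r w c (ones x)) := by
    intro x
    rw [show E x = {ω | ∀ j, X j ω = if x j then 1 else 0} from rfl, hjoint x, polyaPMF_eq]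
  have hWE : ∀ (x : Fin n → Bool) (ω : Ω), ω ∈ E x → W ω = (ones x : ℝ) / n := by
    intro x ω hω
    rw [hW]
    simp only
    congr 1
    rw [Finset.sum_congr rfl fun j _ => hω j]
    rw [ones]
    simp
  have hdisj : ∀ x y : Fin n → Bool, x ≠ y → Disjoint (E x) (E y) := by
    intro x y hxy
    obtain ⟨j, hj⟩ := Function.ne_iff.1 hxy
    rw [Set.disjoint_left]
    intro ω hx hy
    have h1 := hx j
    have h2 := hy j
    rw [h1] at h2
    cases hxj : x j <;> cases hyj : y j <;> simp_all
  -- measurability and integrability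
  have hWmeas : Measurable W := by
    rw [hW]
    exact (Finset.measurable_sum Finset.univ fun j _ => hXm j).div_const _
  have hm : MeasurableSpace.comap W inferInstance ≤ ‹MeasurableSpace Ω› :=
    hWmeas.comap_le
  have hXint : ∀ j, Integrable (X j) μ := fun j =>
    (integrable_const (1:ℝ)).mono' (hXm j).aestronglyMeasurable
      (ae_of_all _ fun ω => by rcases hXval j ω with h | h <;> simp [h])
  have hX'int : Integrable X' μ :=
    (integrable_const (1:ℝ)).mono' hX'm.aestronglyMeasurable
      (ae_of_all _ fun ω => by rcases hX'val ω with h | h <;> simp [h])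
  have hWint : Integrable W μ := by
    rw [hW]
    exact (integrable_finset_sum _ fun j _ => hXint j).div_const _
  have hfrepr : (fun ω => W' ω - W ω) = fun ω => X' ω / n - X l ω / n := by
    funext ω; rw [hW']; ring
  have hfint : Integrable (fun ω => W' ω - W ω) μ := by
    rw [hfrepr]
    exact (hX'int.div_const _).sub ((hXint l).div_const _)
  have hgint : Integrable
      (fun ω => (1 / (n * (A + B + (n:ℝ) - 1))) * ((A + B) * (A / (A + B) - W ω))) μ :=
    (((integrable_const (A / (A + B))).sub hWint).const_mul _).const_mul _
  -- per-x integral of the target function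
  have hxR : ∀ x : Fin n → Bool,
      ∫ ω in E x, (1 / (n * (A + B + (n:ℝ) - 1))) * ((A + B) * (A / (A + B) - W ω)) ∂μ
        = (1 / (n * (A + B + (n:ℝ) - 1))) * ((A + B) * (A / (A + B) - (ones x : ℝ) / n))
            * pPk n r w c (ones x) := by
    intro x
    rw [setIntegral_congr_fun (hEmeas x)
      (g := fun _ => (1 / (n * (A + B + (n:ℝ) - 1)))
        * ((A + B) * (A / (A + B) - (ones x : ℝ) / n)))
      (fun ω hω => by rw [hWE x ω hω])]
    rw [setIntegral_const, measureReal_def, hEμ x, ENNReal.toReal_ofReal (pPk_pos n r w c hr hw _).le,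
      smul_eq_mul]
    ring
  -- per-x integral of W' - W
  have hxL : ∀ x : Fin n → Bool,
      ∫ ω in E x, (W' ω - W ω) ∂μ
        = (1 / (n:ℝ)) * (pPk n r w c (ones x)
              * ((r:ℝ) + c * ((ones x : ℝ) - (if x l = true then (1:ℝ) else 0)))
              / ((r:ℝ) + w + c * ((n:ℝ) - 1))
            - (if x l = true then (1:ℝ) else 0) * pPk n r w c (ones x)) := by
    intro x
    obtain ⟨m, hmdef⟩ : ∃ m, ones (Function.update x l false) = m := ⟨_, rfl⟩
    have hmlt : m < n := hmdef ▸ ones_update_lt hn x l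
    have h1s : ones (Function.update x l true) = m + 1 := by
      rw [ones_update_succ x l, hmdef]
    have hx01 : Function.update x l false ≠ Function.update x l true := by
      intro h
      have := congrFun h l
      simp at this
    have hlval : (l : ℕ) = n - 1 := rfl
    have hjne : ∀ j : Fin n, j ≠ l ↔ (j : ℕ) < n - 1 := by
      intro j
      have h1 : j ≠ l ↔ (j : ℕ) ≠ (l : ℕ) := by
        constructor
        · intro h h'; exact h (Fin.ext h')
        · intro h h'; exact h (by rw [h'])
      rw [h1, hlval]
      have := j.isLt
      omega
    have hprex : {ω | ∀ j : Fin n, (j : ℕ) < n - 1 → X j ω = if x j = true then 1 else 0}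
        = E (Function.update x l false) ∪ E (Function.update x l true) := by
      ext ω
      simp only [Set.mem_setOf_eq, Set.mem_union, hE]
      constructor
      · intro hω
        rcases hXval l ω with h0 | h1
        · left; intro j
          by_cases hj : j = l
          · subst hj; simpa using h0
          · rw [Function.update_of_ne hj]
            exact hω j ((hjne j).1 hj)
        · right; intro j
          by_cases hj : j = l
          · subst hj; simpa using h1
          · rw [Function.update_of_ne hj]
            exact hω j ((hjne j).1 hj)
      · rintro (hω | hω) j hj
        · have h2 := hω j
          rwa [Function.update_of_ne ((hjne j).2 hj)] at h2
        · have h2 := hω j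
          rwa [Function.update_of_ne ((hjne j).2 hj)] at h2
    have hμpre : μ {ω | ∀ j : Fin n, (j : ℕ) < n - 1 → X j ω = if x j = true then 1 else 0}
        = ENNReal.ofReal (pPk n r w c m + pPk n r w c (m + 1)) := by
      rw [hprex, measure_union (hdisj _ _ hx01) (hEmeas _), hEμ, hEμ, hmdef, h1s,
        ENNReal.ofReal_add (pPk_pos n r w c hr hw m).le (pPk_pos n r w c hr hw (m + 1)).le]
    have hXl1 : {ω | X l ω = 1}
          ∩ {ω | ∀ j : Fin n, (j : ℕ) < n - 1 → X j ω = if x j = true then 1 else 0}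
        = E (Function.update x l true) := by
      ext ω
      simp only [Set.mem_inter_iff, Set.mem_setOf_eq, hE]
      constructor
      · rintro ⟨h1, hpre'⟩ j
        by_cases hj : j = l
        · subst hj; simpa using h1
        · rw [Function.update_of_ne hj]
          exact hpre' j ((hjne j).1 hj)
      · intro hω
        refine ⟨by simpa using hω l, fun j hj => ?_⟩
        have h2 := hω j
        rwa [Function.update_of_ne ((hjne j).2 hj)] at h2
    have hsumpos : (0:ℝ) < pPk n r w c m + pPk n r w c (m + 1) :=
      add_pos (pPk_pos n r w c hr hw m) (pPk_pos n r w c hr hw (m + 1))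
    have hcross := pPk_cross n r w c hr hw hmlt
    have hqval : (μ ({ω | X' ω = 1} ∩ E x)).toReal
        = pPk n r w c (ones x) * ((r:ℝ) + c * (m:ℝ)) / ((r:ℝ) + w + c * ((n:ℝ) - 1)) := by
      have hc' := hcond x
      rw [show {ω | ∀ j, X j ω = if x j = true then 1 else 0} = E x from rfl] at hc'
      rw [hXl1, hμpre, hEμ x, hEμ (Function.update x l true), h1s] at hc'
      have hq := congrArg ENNReal.toReal hc'
      rw [ENNReal.toReal_mul, ENNReal.toReal_mul,
        ENNReal.toReal_ofReal hsumpos.le,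
        ENNReal.toReal_ofReal (pPk_pos n r w c hr hw (m + 1)).le,
        ENNReal.toReal_ofReal (pPk_pos n r w c hr hw (ones x)).le] at hq
      have h2 : (μ ({ω | X' ω = 1} ∩ E x)).toReal
          = pPk n r w c (ones x) * pPk n r w c (m + 1)
              / (pPk n r w c m + pPk n r w c (m + 1)) := by
        rw [eq_div_iff hsumpos.ne']
        exact hq
      rw [h2, div_eq_div_iff hsumpos.ne' hD.ne']
      linear_combination pPk n r w c (ones x) * hcross
    have honesm : (m:ℝ) = (ones x : ℝ) - (if x l = true then (1:ℝ) else 0) := by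
      by_cases hxl : x l = true
      · have hx1x : Function.update x l true = x := by
          conv_lhs => rw [← hxl]
          exact Function.update_eq_self l x
        have h3 : ones x = m + 1 := by rw [← hx1x, h1s]
        rw [h3]
        simp [hxl]
      · have hxlf : x l = false := by simpa using hxl
        have hx0x : Function.update x l false = x := by
          conv_lhs => rw [← hxlf]
          exact Function.update_eq_self l x
        have h3 : ones x = m := by rw [← hx0x, hmdef]
        rw [h3]
        simp [hxl]
    have hXlconst : ∫ ω in E x, X l ω ∂μ
        = (if x l = true then (1:ℝ) else 0) * pPk n r w c (ones x) := by
      rw [setIntegral_congr_fun (hEmeas x)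
        (g := fun _ => (if x l = true then (1:ℝ) else 0)) (fun ω hω => hω l)]
      rw [setIntegral_const, measureReal_def, hEμ x, ENNReal.toReal_ofReal (pPk_pos n r w c hr hw _).le,
        smul_eq_mul, mul_comm]
    have hX'ind : ∫ ω in E x, X' ω ∂μ = (μ ({ω | X' ω = 1} ∩ E x)).toReal := by
      have hrepr : ∀ ω, X' ω = Set.indicator {ω | X' ω = 1} (fun _ => (1:ℝ)) ω := by
        intro ω
        rcases hX'val ω with h | h <;> simp [Set.indicator_apply, h]
      rw [setIntegral_congr_fun (hEmeas x) (fun ω _ => hrepr ω),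
        setIntegral_indicator (show MeasurableSet {ω | X' ω = 1} from hX'm (measurableSet_singleton 1)),
        setIntegral_const, smul_eq_mul, mul_one, Set.inter_comm, measureReal_def]
    rw [hfrepr]
    rw [integral_sub ((hX'int.div_const _).integrableOn)
      (((hXint l).div_const _).integrableOn)]
    rw [integral_div, integral_div, hX'ind, hXlconst, hqval, honesm]
    ring
  -- main application
  refine (ae_eq_condExp_of_forall_setIntegral_eq hm hfint
    (fun s _ _ => hgint.integrableOn) ?_ ?_).symm
  · -- set integrals agree
    rintro s ⟨t, ht, rfl⟩ -
    set S : Finset (Fin n → Bool) :=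
      Finset.univ.filter (fun x => ((ones x : ℝ) / n) ∈ t) with hS
    have hpre : W ⁻¹' t = ⋃ x ∈ S, E x := by
      ext ω
      simp only [Set.mem_preimage, Set.mem_iUnion, hS, Finset.mem_filter, Finset.mem_univ,
        true_and, exists_prop]
      constructor
      · intro hWt
        refine ⟨fun j => if X j ω = 1 then true else false, ?_, ?_⟩
        · have hx : ω ∈ E (fun j => if X j ω = 1 then true else false) := by
            intro j
            rcases hXval j ω with h | h <;> simp [h]
          rwa [← hWE _ ω hx]
        · intro j
          rcases hXval j ω with h | h <;> simp [h]
      · rintro ⟨x, hxt, hx⟩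
        rw [hWE x ω hx]
        exact hxt
    have hpd : Set.Pairwise ↑S (Function.onFun Disjoint E) := fun x _ y _ hxy => hdisj x y hxy
    rw [hpre,
      integral_biUnion_finset S (fun x _ => hEmeas x) hpd (fun x _ => hgint.integrableOn),
      integral_biUnion_finset S (fun x _ => hEmeas x) hpd (fun x _ => hfint.integrableOn)]
    rw [Finset.sum_congr rfl fun x _ => hxR x, Finset.sum_congr rfl fun x _ => hxL x]
    -- fiberwise over k = number of ones
    have hmaps : ∀ x ∈ S, ones x ∈ Finset.range (n + 1) := by
      intro x _
      rw [Finset.mem_range]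
      have : ones x ≤ Finset.univ.card := Finset.card_filter_le _ _
      simpa [Finset.card_univ] using Nat.lt_succ_of_le this
    rw [← Finset.sum_fiberwise_of_maps_to hmaps
      (fun x => (1 / (n * (A + B + (n:ℝ) - 1)))
        * ((A + B) * (A / (A + B) - (ones x : ℝ) / n)) * pPk n r w c (ones x)),
      ← Finset.sum_fiberwise_of_maps_to hmaps
      (fun x => (1 / (n:ℝ)) * (pPk n r w c (ones x)
              * ((r:ℝ) + c * ((ones x : ℝ) - (if x l = true then (1:ℝ) else 0)))
              / ((r:ℝ) + w + c * ((n:ℝ) - 1))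
            - (if x l = true then (1:ℝ) else 0) * pPk n r w c (ones x)))]
    refine Finset.sum_congr rfl fun k _ => ?_
    by_cases hkB : ((k : ℝ) / n) ∈ t
    · have hTk : S.filter (fun x => ones x = k)
          = Finset.univ.filter (fun x : Fin n → Bool => ones x = k) := by
        rw [hS, Finset.filter_filter]
        exact Finset.filter_congr fun x _ =>
          ⟨And.right, fun h => ⟨by rw [h]; exact hkB, h⟩⟩
      rw [hTk]
      have hL : ∀ i ∈ Finset.univ.filter (fun x : Fin n → Bool => ones x = k),
          1 / ((n:ℝ) * (A + B + (n:ℝ) - 1)) * ((A + B) * (A / (A + B) - (ones i : ℝ) / n))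
              * pPk n r w c (ones i)
            = 1 / ((n:ℝ) * (A + B + (n:ℝ) - 1)) * ((A + B) * (A / (A + B) - (k : ℝ) / n))
              * pPk n r w c k := by
        intro i hi
        rw [Finset.mem_filter] at hi
        rw [hi.2]
      have hR : ∀ i ∈ Finset.univ.filter (fun x : Fin n → Bool => ones x = k),
          (1:ℝ) / n * (pPk n r w c (ones i)
              * ((r:ℝ) + c * ((ones i : ℝ) - if i l = true then 1 else 0))
              / ((r:ℝ) + w + c * ((n:ℝ) - 1))
            - (if i l = true then 1 else 0) * pPk n r w c (ones i))
            = (1 / (n:ℝ)) * (pPk n r w c k * ((r:ℝ) + c * k)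
                / ((r:ℝ) + w + c * ((n:ℝ) - 1)))
              + (if i l = true then (1:ℝ) else 0)
                * ((1 / (n:ℝ)) * (-(c:ℝ) * pPk n r w c k
                    / ((r:ℝ) + w + c * ((n:ℝ) - 1)) - pPk n r w c k)) := by
        intro i hi
        rw [Finset.mem_filter] at hi
        rw [hi.2]
        by_cases hil : i l = true <;> simp only [hil, if_true, if_false] <;> ring
      rw [Finset.sum_congr rfl hL, Finset.sum_congr rfl hR, Finset.sum_const,
        Finset.sum_add_distrib, Finset.sum_const, ← Finset.sum_mul, Finset.sum_boole]
      rw [nsmul_eq_mul, nsmul_eq_mul]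
      have hcount := count_ones n k l
      rw [← Finset.filter_filter] at hcount
      have hcountR : (n:ℝ) * ((Finset.filter (fun x => x l = true)
              (Finset.filter (fun x : Fin n → Bool => ones x = k) Finset.univ)).card : ℝ)
          = (k:ℝ) * (((Finset.filter
              (fun x : Fin n → Bool => ones x = k) Finset.univ).card) : ℝ) := by
        exact_mod_cast hcount
      have hkey := perk_algebra n r w c hn hr hw hc A B hA hB k _ _
        (pPk n r w c k) hcountR
      exact hkey.symm
    · have hTk : S.filter (fun x => ones x = k) = ∅ := by
        rw [Finset.filter_eq_empty_iff]
        rintro x hx rfl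
        rw [hS, Finset.mem_filter] at hx
        exact hkB hx.2
      rw [hTk]
      simp
  · -- strong measurability w.r.t. comap
    have hWc : Measurable[MeasurableSpace.comap W inferInstance] W :=
      comap_measurable W
    exact StronglyMeasurable.aestronglyMeasurable
      (Measurable.stronglyMeasurable
        (((hWc.const_sub (A / (A + B))).const_mul (A + B)).const_mul _))
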